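/- For every n ≥ 3, the code A_n of Construction 2 is a non-cyclic 2-skew-tolerant binary Gray code of size 2^n − 1 that does not contain the codeword e_{n−1}, and both the first and last transitions of A_n occur in position n. -/

import Mathlib

/-- Codewords `c` and `d` differ exactly at coordinate `i` (1-based), by `±1` there. -/
def TransAt {m : ℕ} (c d : List (ZMod m)) (i : ℕ) : Prop :=
  1 ≤ i ∧ i ≤ c.length ∧ c.length = d.length ∧
  c.take (i-1) = d.take (i-1) ∧ c.drop i = d.drop i ∧
  (d.getD (i-1) 0 = c.getD (i-1) 0 + 1 ∨ d.getD (i-1) 0 = c.getD (i-1) 0 - 1)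

/-- `C` is a cyclic Gray code with transition sequence `δ`. -/
def CyclicGrayWith {m : ℕ} (C : List (List (ZMod m))) (δ : ℕ → ℕ) : Prop :=
  C.Nodup ∧ ∀ i < C.length,
    TransAt (C.getD i []) (C.getD ((i+1) % C.length) []) (δ i)

/-- `C` is a non-cyclic (path) Gray code with transition sequence `δ`. -/
def PathGrayWith {m : ℕ} (C : List (List (ZMod m))) (δ : ℕ → ℕ) : Prop :=
  C.Nodup ∧ ∀ i, i + 1 < C.length →
    TransAt (C.getD i []) (C.getD (i+1) []) (δ i)

/-- cyclic `k`-skew-tolerance. -/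
def SkewCyc (P : ℕ) (δ : ℕ → ℕ) (k : ℤ) : Prop :=
  ∀ i < P, |(δ i : ℤ) - (δ ((i+1) % P) : ℤ)| ≤ k

/-- non-cyclic `k`-skew-tolerance. -/
def SkewPath (P : ℕ) (δ : ℕ → ℕ) (k : ℤ) : Prop :=
  ∀ i, i + 2 < P → |(δ i : ℤ) - (δ (i+1) : ℤ)| ≤ k

/-- the `i`-th standard unit vector (1-based) of length `len` over `ZMod 2`. -/
def unit (len i : ℕ) : List (ZMod 2) :=
  (List.range len).map (fun j => if j + 1 = i then 1 else 0)

/-- pointwise sum of two vectors. -/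
def vadd {m : ℕ} (c d : List (ZMod m)) : List (ZMod m) :=
  List.zipWith (· + ·) c d

/-- `B_{n+1}` from `A_n`: the all-zero word, then `A_n` with `1` appended,
then the reversal of `A_n` minus its first word, with `0` appended. -/
def buildB (An : List (List (ZMod 2))) (len : ℕ) : List (List (ZMod 2)) :=
  List.replicate len (0 : ZMod 2) ::
    (An.map (· ++ [1]) ++ An.tail.reverse.map (· ++ [0]))

/-- Construction 2, codes `A_n` (`n ≥ 3`). -/
def c2A : ℕ → List (List (ZMod 2))
  | 0 => [] | 1 => [] | 2 => []
  | 3 => [[0,0,0],[0,0,1],[0,1,1],[1,1,1],[1,1,0],[1,0,0],[1,0,1]]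
  | (n+4) => (buildB (c2A (n+3)) (n+4)).dropLast ++
      [unit (n+4) (n+2), vadd (unit (n+4) (n+2)) (unit (n+4) (n+4))]

/-- Construction 2, codes `B_n` (`n ≥ 4`). -/
def c2B (n : ℕ) : List (List (ZMod 2)) := buildB (c2A (n-1)) n

/-- Construction 2, codes `C_n` (`n ≥ 4`). -/
def c2C (n : ℕ) : List (List (ZMod 2)) :=
  List.replicate n (0 : ZMod 2) :: unit n (n-2) ::
    vadd (unit n (n-2)) (unit n n) :: (c2B n).tail


namespace C2helper

instance {m : ℕ} (c d : List (ZMod m)) (i : ℕ) : Decidable (TransAt c d i) := by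
  unfold TransAt; infer_instance

lemma transAt_symm {m : ℕ} {c d : List (ZMod m)} {i : ℕ} (h : TransAt c d i) :
    TransAt d c i := by
  obtain ⟨h1, h2, h3, h4, h5, h6⟩ := h
  refine ⟨h1, h3 ▸ h2, h3.symm, h4.symm, h5.symm, ?_⟩
  rcases h6 with h | h
  · right; rw [h]; ring
  · left; rw [h]; ring

lemma transAt_suffix {m : ℕ} {c d : List (ZMod m)} {i : ℕ} (v : List (ZMod m))
    (h : TransAt c d i) : TransAt (c ++ v) (d ++ v) i := by
  obtain ⟨h1, h2, h3, h4, h5, h6⟩ := h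
  refine ⟨h1, le_trans h2 (by simp), by simp [h3], ?_, ?_, ?_⟩
  · rw [List.take_append_of_le_length (by omega),
      List.take_append_of_le_length (by omega)]
    exact h4
  · rw [List.drop_append_of_le_length h2, List.drop_append_of_le_length (h3 ▸ h2), h5]
  · rw [List.getD_append _ _ _ _ (by omega), List.getD_append _ _ _ _ (by omega)]
    exact h6

lemma transAt_prefix {m : ℕ} {c d : List (ZMod m)} {i : ℕ} (u : List (ZMod m))
    (h : TransAt c d i) : TransAt (u ++ c) (u ++ d) (u.length + i) := by
  obtain ⟨h1, h2, h3, h4, h5, h6⟩ := h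
  refine ⟨by omega, by simp; omega, by simp [h3], ?_, ?_, ?_⟩
  · have e : u.length + i - 1 = u.length + (i - 1) := by omega
    rw [e, List.take_length_add_append, List.take_length_add_append, h4]
  · rw [List.drop_length_add_append, List.drop_length_add_append, h5]
  · have e : u.length + i - 1 = u.length + (i - 1) := by omega
    rw [e, List.getD_append_right _ _ _ _ (by omega), List.getD_append_right _ _ _ _ (by omega)]
    simpa using h6

lemma transAt_single (u v : List (ZMod 2)) (x : ZMod 2) :
    TransAt (u ++ x :: v) (u ++ (x+1) :: v) (u.length + 1) := by
  refine transAt_prefix u ?_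
  exact ⟨le_refl 1, by simp, by simp, by simp, by simp, Or.inl (by simp)⟩

lemma unit_length (n i : ℕ) : (unit n i).length = n := by simp [unit]

lemma unit_succ (n i : ℕ) :
    unit (n+1) i = unit n i ++ [if n + 1 = i then (1 : ZMod 2) else 0] := by
  simp [unit, List.range_succ]

lemma unit_of_lt {n i : ℕ} (h : n < i) : unit n i = List.replicate n 0 := by
  refine List.eq_replicate_iff.mpr ⟨by simp [unit], ?_⟩
  intro y hy
  simp only [unit, List.mem_map, List.mem_range] at hy
  obtain ⟨a, ha, rfl⟩ := hy
  rw [if_neg (by omega)]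

lemma unit_top {n : ℕ} (h : 1 ≤ n) : unit n n = List.replicate (n-1) 0 ++ [1] := by
  obtain ⟨m, rfl⟩ : ∃ m, n = m + 1 := ⟨n - 1, by omega⟩
  rw [unit_succ, if_pos rfl, unit_of_lt (by omega)]
  simp

lemma unit_pred {n : ℕ} (h : 2 ≤ n) : unit n (n-1) = List.replicate (n-2) 0 ++ [1, 0] := by
  obtain ⟨m, rfl⟩ : ∃ m, n = m + 2 := ⟨n - 2, by omega⟩
  have e : m + 2 - 1 = m + 1 := by omega
  rw [e, unit_succ, if_neg (by omega), unit_top (by omega)]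
  simp

lemma vadd_rep (k : ℕ) : vadd (List.replicate k (0 : ZMod 2)) (List.replicate k 0) =
    List.replicate k 0 := by
  induction k with
  | zero => rfl
  | succ k ih => simp [vadd, List.replicate_succ, ih]

lemma vadd_append {c d u v : List (ZMod 2)} (h : c.length = d.length) :
    vadd (c ++ u) (d ++ v) = vadd c d ++ vadd u v :=
  List.zipWith_append h

lemma unit_top' {n : ℕ} (h : 2 ≤ n) : unit n n = List.replicate (n-2) 0 ++ [0, 1] := by
  rw [unit_top (by omega)]
  obtain ⟨m, rfl⟩ : ∃ m, n = m + 2 := ⟨n - 2, by omega⟩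
  simp [List.replicate_succ']

lemma unit_top'' {n : ℕ} (h : 3 ≤ n) : unit n n = List.replicate (n-3) 0 ++ [0, 0, 1] := by
  rw [unit_top' (by omega)]
  obtain ⟨m, rfl⟩ : ∃ m, n = m + 3 := ⟨n - 3, by omega⟩
  simp [List.replicate_succ']

lemma vadd_key {n : ℕ} (h : 2 ≤ n) :
    vadd (unit n (n-1)) (unit n n) = List.replicate (n-2) 0 ++ [1, 1] := by
  rw [unit_pred h, unit_top' h, vadd_append (by simp), vadd_rep]
  congr 1

lemma unit_pred2 {n : ℕ} (h : 3 ≤ n) : unit n (n-2) = List.replicate (n-3) 0 ++ [1, 0, 0] := by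
  obtain ⟨m, rfl⟩ : ∃ m, n = m + 3 := ⟨n - 3, by omega⟩
  have e1 : m + 3 - 2 = m + 1 := by omega
  have e2 : m + 2 - 1 = m + 1 := by omega
  rw [e1, show (m:ℕ)+3 = (m+2)+1 from rfl, unit_succ, if_neg (by omega), ← e2,
    unit_pred (by omega)]
  simp

lemma vadd_key2 {n : ℕ} (h : 3 ≤ n) :
    vadd (unit n (n-2)) (unit n n) = List.replicate (n-3) 0 ++ [1, 0, 1] := by
  rw [unit_pred2 h, unit_top'' h, vadd_append (by simp), vadd_rep]
  congr 1

lemma getD_rep (k i : ℕ) : (List.replicate k (0 : ZMod 2)).getD i 0 = 0 := by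
  rcases lt_or_ge i k with h | h
  · rw [List.getD_eq_getElem _ _ (by simpa using h)]; simp
  · rw [List.getD_eq_default _ _ (by simpa using h)]

lemma getD_rep_app (k : ℕ) (s : List (ZMod 2)) (i : ℕ) :
    (List.replicate k 0 ++ s).getD i 0 = if i < k then 0 else s.getD (i - k) 0 := by
  split_ifs with h
  · rw [List.getD_append _ _ _ _ (by simpa using h)]
    exact getD_rep k i
  · rw [List.getD_append_right _ _ _ _ (by simpa using h)]
    simp

lemma ne_of_getD {x y : List (ZMod 2)} (i : ℕ) (h : x.getD i 0 ≠ y.getD i 0) : x ≠ y :=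
  fun e => h (e ▸ rfl)

lemma concat_inj {α : Type*} {x y : List α} {b c : α} (h : x ++ [b] = y ++ [c]) :
    x = y ∧ b = c := by
  obtain ⟨h1, h2⟩ := List.append_inj' h (by simp)
  exact ⟨h1, by simpa using h2⟩

lemma ne_concat {α : Type*} {b c : α} (h : b ≠ c) (x y : List α) : x ++ [b] ≠ y ++ [c] :=
  fun e => h (concat_inj e).2

lemma reverse_dropLast {α : Type*} (l : List α) : l.reverse.dropLast = l.tail.reverse := by
  have h := List.tail_reverse (l := l.reverse)
  rw [List.reverse_reverse] at h
  rw [h, List.reverse_reverse]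

lemma buildB_dropLast (a : List (List (ZMod 2))) (len : ℕ) (h : 2 ≤ a.length) :
    (buildB a len).dropLast = List.replicate len 0 ::
      (a.map (· ++ [1]) ++ (a.tail.tail).reverse.map (· ++ [0])) := by
  have h1 : a.tail.reverse.map (· ++ [(0 : ZMod 2)]) ≠ [] := by
    have ht : a.tail ≠ [] := by
      intro e
      have := congrArg List.length e
      simp [List.length_tail] at this
      omega
    simp [ht, ← List.map_tail]
  rw [buildB, List.dropLast_cons_of_ne_nil (List.append_ne_nil_of_right_ne_nil _ h1),
    List.dropLast_append_of_ne_nil h1, ← List.map_dropLast, reverse_dropLast]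

lemma c2A_succ (n : ℕ) (h : 3 ≤ n) :
    c2A (n+1) = (buildB (c2A n) (n+1)).dropLast ++
      [unit (n+1) (n-1), vadd (unit (n+1) (n-1)) (unit (n+1) (n+1))] := by
  obtain ⟨k, rfl⟩ : ∃ k, n = k + 3 := ⟨n - 3, by omega⟩
  rfl


/-- transition sequence for `A_{n+1}` built from that of `A_n`. -/
def dstep (n L : ℕ) (δ : ℕ → ℕ) : ℕ → ℕ := fun i =>
  if i = 0 then n+1
  else if i < L then δ (i-1)
  else if i = L then n+1
  else if i ≤ 2*L-3 then δ (2*L - i - 1)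
  else if i = 2*L-2 then n
  else n+1

/-- Strengthened induction invariant. -/
def Good (n : ℕ) : Prop :=
  (∀ c ∈ c2A n, c.length = n) ∧ (c2A n).length = 2 ^ n - 1 ∧
  unit n (n-1) ∉ c2A n ∧
  (c2A n).getD 0 [] = List.replicate n 0 ∧
  (c2A n).getD 1 [] = unit n n ∧
  (c2A n).getD 2 [] = vadd (unit n (n-1)) (unit n n) ∧
  ∃ δ : ℕ → ℕ, PathGrayWith (c2A n) δ ∧ SkewPath (c2A n).length δ 2 ∧
    δ 0 = n ∧ δ 1 = n - 1 ∧ δ 2 = n - 2 ∧ δ ((c2A n).length - 2) = n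

lemma good3 : Good 3 := by
  refine ⟨by decide, by decide, by decide, by decide, by decide, by decide,
    fun i => [3,2,1,3,2,3].getD i 0, ⟨by decide, ?_⟩, ?_, by decide, by decide, by decide,
    by decide⟩
  · intro i hi
    have h : i < 6 := by simp [c2A] at hi; omega
    interval_cases i <;> decide
  · intro i hi
    have h : i < 5 := by simp [c2A] at hi; omega
    interval_cases i <;> decide

set_option maxHeartbeats 2000000 in
lemma good_succ (n : ℕ) (hn : 3 ≤ n) (ih : Good n) : Good (n + 1) := by
  obtain ⟨hlen, hcard, hq, h0, h1, h2, δ, ⟨hnd, htr⟩, hskew, hδ0, hδ1, hδ2, hδlast⟩ := ih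
  set a := c2A n with ha_def
  set L := a.length with hLdef
  have hlen_a : a.length = L := rfl
  have hL7 : 7 ≤ L := by
    have h8 : (8:ℕ) ≤ 2 ^ n := by
      calc (8:ℕ) = 2^3 := rfl
      _ ≤ 2^n := Nat.pow_le_pow_right (by norm_num) hn
    omega
  -- destructure the first three elements of a
  obtain ⟨x0, t0, e0⟩ := List.exists_cons_of_ne_nil
    (List.ne_nil_of_length_pos (l := a) (by omega))
  have ht0 : t0.length = L - 1 := by
    have := congrArg List.length e0; simp at this; omega
  obtain ⟨x1, t1, e1⟩ := List.exists_cons_of_ne_nil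
    (List.ne_nil_of_length_pos (l := t0) (by omega))
  have ht1 : t1.length = L - 2 := by
    have := congrArg List.length e1; simp at this; omega
  obtain ⟨x2, rest, e2⟩ := List.exists_cons_of_ne_nil
    (List.ne_nil_of_length_pos (l := t1) (by omega))
  have hsp : a = x0 :: x1 :: x2 :: rest := by rw [e0, e1, e2]
  have htt : a.tail.tail = x2 :: rest := by rw [hsp]; rfl
  have hx0 : x0 = List.replicate n 0 := by rw [hsp] at h0; simpa using h0
  have hx1 : x1 = unit n n := by rw [hsp] at h1; simpa using h1
  have hx2 : x2 = vadd (unit n (n-1)) (unit n n) := by rw [hsp] at h2; simpa using h2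
  -- nodup facts about a
  have hnd' := hnd
  rw [hsp, List.nodup_cons, List.nodup_cons] at hnd'
  obtain ⟨hx0nm, hx1nm, hndtt⟩ := hnd'
  -- concrete forms
  have hu : unit (n+1) (n-1) = List.replicate (n-2) 0 ++ [1,0,0] := by
    have e : n + 1 - 2 = n - 1 := by omega
    have e' : n + 1 - 3 = n - 2 := by omega
    rw [← e, ← e', unit_pred2 (by omega)]
  have hw : vadd (unit (n+1) (n-1)) (unit (n+1) (n+1)) =
      List.replicate (n-2) 0 ++ [1,0,1] := by
    have e : n + 1 - 2 = n - 1 := by omega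
    have e' : n + 1 - 3 = n - 2 := by omega
    rw [← e, ← e', vadd_key2 (by omega)]
  have hu' : unit (n+1) (n-1) = unit n (n-1) ++ [0] := by
    rw [hu, unit_pred (by omega)]; simp
  have hw' : vadd (unit (n+1) (n-1)) (unit (n+1) (n+1)) = unit n (n-1) ++ [1] := by
    rw [hw, unit_pred (by omega)]; simp
  have hz' : List.replicate (n+1) (0:ZMod 2) = List.replicate n 0 ++ [0] := by
    rw [List.replicate_succ']
  -- the shape of c2A (n+1)
  have hA : c2A (n+1) = List.replicate (n+1) 0 ::
      (a.map (· ++ [1]) ++ ((a.tail.tail).reverse.map (· ++ [0]) ++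
        [unit (n+1) (n-1), vadd (unit (n+1) (n-1)) (unit (n+1) (n+1))])) := by
    rw [c2A_succ n hn, buildB_dropLast a (n+1) (by omega)]
    simp [List.append_assoc]
  have httlen : a.tail.tail.length = L - 2 := by rw [htt]; rw [hsp] at hlen_a; simp at hlen_a ⊢; omega
  have hAlen : (c2A (n+1)).length = 2*L + 1 := by
    rw [hA]; simp [httlen]; omega
  -- getD facts
  have gd0 : (c2A (n+1)).getD 0 [] = List.replicate (n+1) 0 := by rw [hA]; rfl
  have gdM1 : ∀ j, j < L → (c2A (n+1)).getD (j+1) [] = a.getD j [] ++ [1] := by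
    intro j hj
    rw [hA, List.getD_cons_succ,
      List.getD_append _ _ _ _ (by simpa using hj),
      List.getD_eq_getElem _ _ (by simpa using hj),
      List.getElem_map,
      List.getD_eq_getElem _ _ (by omega)]
  have gdM0 : ∀ i, L + 1 ≤ i → i ≤ 2*L - 2 →
      (c2A (n+1)).getD i [] = a.getD (2*L - i) [] ++ [0] := by
    intro i hi1 hi2
    obtain ⟨j, rfl⟩ : ∃ j, i = j + 1 := ⟨i - 1, by omega⟩
    rw [hA, List.getD_cons_succ,
      List.getD_append_right _ _ _ _ (by simp; omega),
      List.getD_append _ _ _ _ (by simp [httlen]; omega),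
      List.getD_eq_getElem _ _ (by simp [httlen]; omega),
      List.getElem_map, List.getElem_reverse,
      List.getD_eq_getElem _ _ (by omega)]
    simp only [List.getElem_tail]
    congr 1
    apply getElem_congr
    simp only [List.length_map, httlen]
    have hml : (a.map (· ++ [(1:ZMod 2)])).length = L := by simp [hlen_a]
    omega
  have gdu : (c2A (n+1)).getD (2*L-1) [] = unit (n+1) (n-1) := by
    obtain ⟨j, hj⟩ : ∃ j, 2*L-1 = j + 1 := ⟨2*L-2, by omega⟩
    rw [hj, hA, List.getD_cons_succ,
      List.getD_append_right _ _ _ _ (by simp; omega),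
      List.getD_append_right _ _ _ _ (by simp [httlen]; omega)]
    have : j - (a.map (· ++ [(1:ZMod 2)])).length -
        ((a.tail.tail).reverse.map (· ++ [(0:ZMod 2)])).length = 0 := by
      simp [httlen]; omega
    rw [this]; rfl
  have gdw : (c2A (n+1)).getD (2*L) [] =
      vadd (unit (n+1) (n-1)) (unit (n+1) (n+1)) := by
    obtain ⟨j, hj⟩ : ∃ j, 2*L = j + 1 := ⟨2*L-1, by omega⟩
    rw [hj, hA, List.getD_cons_succ,
      List.getD_append_right _ _ _ _ (by simp; omega),
      List.getD_append_right _ _ _ _ (by simp [httlen]; omega)]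
    have : j - (a.map (· ++ [(1:ZMod 2)])).length -
        ((a.tail.tail).reverse.map (· ++ [(0:ZMod 2)])).length = 1 := by
      simp [httlen]; omega
    rw [this]; rfl
  have hmemtt : ∀ x ∈ a.tail.tail, x ∈ a := fun x hx =>
    List.mem_of_mem_tail (List.mem_of_mem_tail hx)
  have glen : ∀ c ∈ c2A (n+1), c.length = n+1 := by
    intro c hc
    rw [hA] at hc
    simp only [List.mem_cons, List.mem_append, List.mem_map, List.mem_reverse,
      List.not_mem_nil, or_false] at hc
    rcases hc with rfl | ⟨x, hx, rfl⟩ | ⟨x, hx, rfl⟩ | rfl | rfl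
    · simp
    · simp [hlen x hx]
    · simp [hlen x (hmemtt x hx)]
    · exact unit_length _ _
    · rw [hw]; simp; omega
  have gcard : (c2A (n+1)).length = 2^(n+1) - 1 := by
    rw [hAlen, pow_succ]; omega
  have hun : unit (n+1) n = unit n n ++ [0] := by
    rw [unit_succ, if_neg (by omega)]
  have hnnne : unit n n ≠ unit n (n-1) := by
    apply ne_of_getD (n-1)
    rw [unit_top (by omega), unit_pred (by omega), getD_rep_app, getD_rep_app,
      if_neg (by omega), if_neg (by omega),
      show n-1-(n-1) = 0 from by omega, show n-1-(n-2) = 1 from by omega]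
    decide
  have hrep_ne : unit n (n-1) ≠ List.replicate n 0 := by
    apply ne_of_getD (n-2)
    rw [unit_pred (by omega), getD_rep, getD_rep_app, if_neg (by omega),
      show n-2-(n-2) = 0 from by omega]
    decide
  have gq : unit (n+1) n ∉ c2A (n+1) := by
    rw [hA]
    intro hc
    simp only [List.mem_cons, List.mem_append, List.mem_map, List.mem_reverse,
      List.not_mem_nil, or_false] at hc
    rcases hc with hc | ⟨x, hx, hc⟩ | ⟨x, hx, hc⟩ | hc | hc
    · rw [hun, hz'] at hc
      have h' := (concat_inj hc).1
      exact hx0nm (by rw [hx0, hx1, ← h']; exact List.mem_cons_self)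
    · rw [hun] at hc
      exact absurd (concat_inj hc).2 (by decide)
    · rw [hun] at hc
      have h' := (concat_inj hc).1
      rw [htt] at hx
      exact hx1nm (by rw [hx1, ← h']; exact hx)
    · rw [hun, hu'] at hc
      exact hnnne (concat_inj hc).1
    · rw [hun, hw'] at hc
      exact absurd (concat_inj hc).2 (by decide)
  have gg1 : (c2A (n+1)).getD 1 [] = unit (n+1) (n+1) := by
    have h' := gdM1 0 (by omega)
    rw [show (0:ℕ)+1 = 1 from rfl] at h'
    rw [h', h0, unit_top (by omega)]
    simp
  have gg2 : (c2A (n+1)).getD 2 [] = vadd (unit (n+1) (n+1-1)) (unit (n+1) (n+1)) := by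
    have h' := gdM1 1 (by omega)
    rw [show (1:ℕ)+1 = 2 from rfl] at h'
    rw [h', h1, vadd_key (n := n+1) (by omega), unit_top (by omega),
      show n+1-2 = n-1 from by omega]
    simp
  have hinj1 : Function.Injective (fun x : List (ZMod 2) => x ++ [1]) :=
    fun x y h => (concat_inj h).1
  have hinj0 : Function.Injective (fun x : List (ZMod 2) => x ++ [0]) :=
    fun x y h => (concat_inj h).1
  have hndtt' : a.tail.tail.Nodup := by rw [htt]; exact hndtt
  have huw : unit (n+1) (n-1) ≠ vadd (unit (n+1) (n-1)) (unit (n+1) (n+1)) := by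
    apply ne_of_getD n
    rw [hw, hu, getD_rep_app, getD_rep_app, if_neg (by omega), if_neg (by omega),
      show n-(n-2) = 2 from by omega]
    decide
  have gnd : (c2A (n+1)).Nodup := by
    rw [hA]
    refine List.nodup_cons.mpr ⟨?_, ?_⟩
    · intro hc
      simp only [List.mem_append, List.mem_map, List.mem_reverse, List.mem_cons,
        List.not_mem_nil, or_false] at hc
      rcases hc with ⟨x, hx, hc⟩ | ⟨x, hx, hc⟩ | hc | hc
      · rw [hz'] at hc
        exact absurd (concat_inj hc).2 (by decide)
      · rw [hz'] at hc
        have h' := (concat_inj hc).1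
        rw [htt] at hx
        exact hx0nm (by rw [hx0, ← h']; exact List.mem_cons_of_mem _ hx)
      · rw [hz', hu'] at hc
        exact hrep_ne ((concat_inj hc.symm).1)
      · rw [hz', hw'] at hc
        exact absurd (concat_inj hc).2 (by decide)
    · refine List.nodup_append'.mpr ⟨List.Nodup.map hinj1 hnd, ?_, ?_⟩
      · refine List.nodup_append'.mpr ⟨List.Nodup.map hinj0 (List.nodup_reverse.mpr hndtt'),
          by simp [huw], ?_⟩
        intro t ht htuw
        simp only [List.mem_map, List.mem_reverse] at ht
        obtain ⟨x, hx, rfl⟩ := ht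
        simp only [List.mem_cons, List.not_mem_nil, or_false] at htuw
        rcases htuw with hc | hc
        · rw [hu'] at hc
          have h' := (concat_inj hc).1
          exact hq (h' ▸ hmemtt x hx)
        · rw [hw'] at hc
          exact absurd (concat_inj hc).2 (by decide)
      · intro t ht ht2
        simp only [List.mem_map] at ht
        obtain ⟨x, hx, rfl⟩ := ht
        simp only [List.mem_append, List.mem_map, List.mem_reverse, List.mem_cons,
          List.not_mem_nil, or_false] at ht2
        rcases ht2 with ⟨y, hy, hc⟩ | hc | hc
        · exact absurd (concat_inj hc).2 (by decide)
        · rw [hu'] at hc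
          exact absurd (concat_inj hc).2 (by decide)
        · rw [hw'] at hc
          have h' := (concat_inj hc).1
          exact hq (h' ▸ hx)
  refine ⟨glen, gcard, gq, gd0, gg1, gg2, dstep n L δ, ⟨gnd, ?_⟩, ?_, ?_, ?_, ?_, ?_⟩
  · -- transitions
    intro i hi
    rw [hAlen] at hi
    rcases Nat.lt_or_ge i 1 with h1' | h1'
    · have hi0 : i = 0 := by omega
      subst hi0
      have ed : dstep n L δ 0 = n+1 := by simp only [dstep]; split_ifs <;> (try exact absurd ‹False› (fun f => f)) <;> omega
      rw [ed, gd0, gdM1 0 (by omega), h0, hz']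
      have ht := transAt_single (List.replicate n (0:ZMod 2)) [] 0
      simpa using ht
    · rcases Nat.lt_or_ge i L with h2' | h2'
      · have ed : dstep n L δ i = δ (i-1) := by
          simp only [dstep]; split_ifs <;> (try exact absurd ‹False› (fun f => f)) <;> omega
        obtain ⟨j, rfl⟩ : ∃ j, i = j + 1 := ⟨i-1, by omega⟩
        rw [ed, gdM1 j (by omega), gdM1 (j+1) (by omega),
          show j+1-1 = j from by omega]
        exact transAt_suffix [1] (htr j (by omega))
      · rcases Nat.eq_or_lt_of_le h2' with h3' | h3'
        · have hiL : i = L := h3'.symm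
          subst hiL
          have ed : dstep n L δ L = n+1 := by
            simp only [dstep]; split_ifs <;> (try exact absurd ‹False› (fun f => f)) <;> omega
          obtain ⟨k, hk⟩ : ∃ k, L = k + 1 := ⟨L-1, by omega⟩
          rw [ed, hk, gdM1 k (by omega), gdM0 (k+1+1) (by omega) (by omega),
            show 2*L - (k+1+1) = k from by omega]
          have hlk : (a.getD k []).length = n := hlen _
            (by rw [List.getD_eq_getElem _ _ (by omega)]; exact List.getElem_mem _)
          have ht := transAt_single (a.getD k []) [] 1
          rw [hlk, show (1:ZMod 2)+1 = 0 from by decide] at ht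
          exact ht
        · rcases Nat.lt_or_ge i (2*L-2) with h4' | h4'
          · have ed : dstep n L δ i = δ (2*L - i - 1) := by
              simp only [dstep]; split_ifs <;> (try exact absurd ‹False› (fun f => f)) <;> omega
            rw [ed, gdM0 i (by omega) (by omega), gdM0 (i+1) (by omega) (by omega)]
            obtain ⟨j, hj1, hj2⟩ : ∃ j, 2*L - i = j + 1 ∧ 2*L - (i+1) = j :=
              ⟨2*L-i-1, by omega, by omega⟩
            rw [hj1, hj2, show j+1-1 = j from by omega]
            exact transAt_suffix [0] (transAt_symm (htr j (by omega)))
          · rcases Nat.eq_or_lt_of_le h4' with h5' | h5'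
            · have hi5 : i = 2*L-2 := h5'.symm
              subst hi5
              have ed : dstep n L δ (2*L-2) = n := by
                simp only [dstep]; split_ifs <;> (try exact absurd ‹False› (fun f => f)) <;> omega
              rw [ed, gdM0 (2*L-2) (by omega) (by omega),
                show 2*L - (2*L-2) = 2 from by omega,
                show 2*L-2+1 = 2*L-1 from by omega, gdu, h2,
                vadd_key (n := n) (by omega), hu]
              have ht := transAt_single (List.replicate (n-2) (0:ZMod 2) ++ [1]) [0] 1
              rw [show (1:ZMod 2)+1 = 0 from by decide] at ht
              have e1 : (List.replicate (n-2) (0:ZMod 2) ++ [1]).length + 1 = n := by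
                simp; omega
              rw [e1] at ht
              simpa [List.append_assoc] using ht
            · have hi5 : i = 2*L-1 := by omega
              subst hi5
              have ed : dstep n L δ (2*L-1) = n+1 := by
                simp only [dstep]; split_ifs <;> (try exact absurd ‹False› (fun f => f)) <;> omega
              rw [ed, gdu, show 2*L-1+1 = 2*L from by omega, gdw, hw, hu]
              have ht := transAt_single (List.replicate (n-2) (0:ZMod 2) ++ [1,0]) [] 0
              rw [show (0:ZMod 2)+1 = 1 from by decide] at ht
              have e1 : (List.replicate (n-2) (0:ZMod 2) ++ [1,0]).length + 1 = n+1 := by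
                simp; omega
              rw [e1] at ht
              simpa [List.append_assoc] using ht
  · -- skew
    intro i hi
    rw [hAlen] at hi
    rcases Nat.lt_or_ge i 1 with h1' | h1'
    · have hi0 : i = 0 := by omega
      subst hi0
      have e1 : dstep n L δ 0 = n+1 := by simp only [dstep]; split_ifs <;> (try exact absurd ‹False› (fun f => f)) <;> omega
      have e2 : dstep n L δ (0+1) = δ (0+1-1) := by
        simp only [dstep]; split_ifs <;> (try exact absurd ‹False› (fun f => f)) <;> omega
      rw [e1, e2, show (0:ℕ)+1-1 = 0 from rfl, hδ0, abs_le]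
      constructor <;> push_cast <;> omega
    · rcases Nat.lt_or_ge i (L-1) with h2' | h2'
      · have e1 : dstep n L δ i = δ (i-1) := by
          simp only [dstep]; split_ifs <;> (try exact absurd ‹False› (fun f => f)) <;> omega
        have e2 : dstep n L δ (i+1) = δ (i+1-1) := by
          simp only [dstep]; split_ifs <;> (try exact absurd ‹False› (fun f => f)) <;> omega
        rw [e1, e2, show i+1-1 = i from by omega]
        have ht := hskew (i-1) (by omega)
        rwa [show i-1+1 = i from by omega] at ht
      · rcases Nat.eq_or_lt_of_le h2' with h3' | h3'
        · have hi3 : i = L-1 := h3'.symm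
          subst hi3
          have e1 : dstep n L δ (L-1) = δ (L-1-1) := by
            simp only [dstep]; split_ifs <;> (try exact absurd ‹False› (fun f => f)) <;> omega
          have e2 : dstep n L δ (L-1+1) = n+1 := by
            simp only [dstep]; split_ifs <;> (try exact absurd ‹False› (fun f => f)) <;> omega
          rw [e1, e2, show L-1-1 = L-2 from by omega, hδlast, abs_le]
          constructor <;> push_cast <;> omega
        · rcases Nat.lt_or_ge i (L+1) with h4' | h4'
          · have hiL : i = L := by omega
            subst hiL
            have e1 : dstep n L δ L = n+1 := by
              simp only [dstep]; split_ifs <;> (try exact absurd ‹False› (fun f => f)) <;> omega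
            have e2 : dstep n L δ (L+1) = δ (2*L-(L+1)-1) := by
              simp only [dstep]; split_ifs <;> (try exact absurd ‹False› (fun f => f)) <;> omega
            rw [e1, e2, show 2*L-(L+1)-1 = L-2 from by omega, hδlast, abs_le]
            constructor <;> push_cast <;> omega
          · rcases Nat.lt_or_ge i (2*L-3) with h5' | h5'
            · have e1 : dstep n L δ i = δ (2*L - i - 1) := by
                simp only [dstep]; split_ifs <;> (try exact absurd ‹False› (fun f => f)) <;> omega
              have e2 : dstep n L δ (i+1) = δ (2*L-(i+1)-1) := by
                simp only [dstep]; split_ifs <;> (try exact absurd ‹False› (fun f => f)) <;> omega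
              rw [e1, e2, show 2*L-(i+1)-1 = 2*L-i-2 from by omega]
              have ht := hskew (2*L-i-2) (by omega)
              rw [show 2*L-i-2+1 = 2*L-i-1 from by omega] at ht
              rw [abs_sub_comm] at ht
              exact ht
            · rcases Nat.eq_or_lt_of_le h5' with h6' | h6'
              · have hi6 : i = 2*L-3 := h6'.symm
                subst hi6
                have e1 : dstep n L δ (2*L-3) = δ (2*L-(2*L-3)-1) := by
                  simp only [dstep]; split_ifs <;> (try exact absurd ‹False› (fun f => f)) <;> omega
                have e2 : dstep n L δ (2*L-3+1) = n := by
                  simp only [dstep]; split_ifs <;> (try exact absurd ‹False› (fun f => f)) <;> omega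
                rw [e1, e2, show 2*L-(2*L-3)-1 = 2 from by omega, hδ2, abs_le]
                constructor <;> push_cast <;> omega
              · have hi6 : i = 2*L-2 := by omega
                subst hi6
                have e1 : dstep n L δ (2*L-2) = n := by
                  simp only [dstep]; split_ifs <;> (try exact absurd ‹False› (fun f => f)) <;> omega
                have e2 : dstep n L δ (2*L-2+1) = n+1 := by
                  simp only [dstep]; split_ifs <;> (try exact absurd ‹False› (fun f => f)) <;> omega
                rw [e1, e2, abs_le]
                constructor <;> push_cast <;> omega
  · simp only [dstep]; split_ifs <;> (try exact absurd ‹False› (fun f => f)) <;> omega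
  · have e : dstep n L δ 1 = δ (1-1) := by
      simp only [dstep]; split_ifs <;> (try exact absurd ‹False› (fun f => f)) <;> omega
    rw [e, show (1:ℕ)-1 = 0 from rfl, hδ0]; omega
  · have e : dstep n L δ 2 = δ (2-1) := by
      simp only [dstep]; split_ifs <;> (try exact absurd ‹False› (fun f => f)) <;> omega
    rw [e, show (2:ℕ)-1 = 1 from rfl, hδ1]; omega
  · rw [hAlen]
    have e : dstep n L δ (2*L+1-2) = n+1 := by
      simp only [dstep]; split_ifs <;> (try exact absurd ‹False› (fun f => f)) <;> omega
    rw [e]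

lemma good_all (n : ℕ) (hn : 3 ≤ n) : Good n := by
  induction n, hn using Nat.le_induction with
  | base => exact good3
  | succ n hn ih => exact good_succ n hn ih

end C2helper

theorem stmt4 : ∀ n : ℕ, 3 ≤ n →
    (∀ c ∈ c2A n, c.length = n) ∧ (c2A n).length = 2 ^ n - 1 ∧
    unit n (n-1) ∉ c2A n ∧
    ∃ δ : ℕ → ℕ, PathGrayWith (c2A n) δ ∧ SkewPath (c2A n).length δ 2 ∧
      δ 0 = n ∧ δ ((c2A n).length - 2) = n := by
  intro n hn
  obtain ⟨h1, h2, h3, _, _, _, δ, hp, hs, hd0, _, _, hdl⟩ := C2helper.good_all n hn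
  exact ⟨h1, h2, h3, δ, hp, hs, hd0, hdl⟩
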